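/- Let F̃, G̃ : (1, ∞) → (0, ∞) be differentiable, F̃ positive and nondecreasing, G̃ nondecreasing, and suppose there is a constant C > 0 with F̃(R)² ≤ C² F̃'(R) · R² G̃'(R) for all R > 1. Then for all 1 < r < R, (log(R/r))² ≤ C² G̃(R)/F̃(r). Consequently, if lim_{r→∞} F̃(r) > 0, then lim sup_{R→∞} (log R)²/G̃(R) < ∞. -/

import Mathlib

open Set Filter Topology

lemma aux_deriv_nonneg {f : ℝ → ℝ} {d s : ℝ} (hs : 1 < s)
    (hd : HasDerivAt f d s) (hm : MonotoneOn f (Ioi (1 : ℝ))) : 0 ≤ d := by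
  have h := hasDerivAt_iff_tendsto_slope.mp hd
  have h2 : Tendsto (slope f s) (𝓝[>] s) (𝓝 d) :=
    h.mono_left (nhdsWithin_mono s (fun y hy => ne_of_gt hy))
  refine ge_of_tendsto h2 ?_
  filter_upwards [self_mem_nhdsWithin] with y hy
  have hy' : s < y := hy
  have h1 : f s ≤ f y := hm (mem_Ioi.mpr hs) (mem_Ioi.mpr (hs.trans hy')) hy'.le
  rw [slope_def_field]
  have h3 : 0 < y - s := by linarith
  have h4 : 0 ≤ f y - f s := by linarith
  rw [div_eq_mul_inv]
  positivity

theorem stmt8 (F G F' G' : ℝ → ℝ) (C : ℝ) (hC : 0 < C)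
    (hF' : ∀ R ∈ Ioi (1 : ℝ), HasDerivAt F (F' R) R)
    (hG' : ∀ R ∈ Ioi (1 : ℝ), HasDerivAt G (G' R) R)
    (hFpos : ∀ R ∈ Ioi (1 : ℝ), 0 < F R)
    (hGpos : ∀ R ∈ Ioi (1 : ℝ), 0 < G R)
    (hFmono : MonotoneOn F (Ioi (1 : ℝ)))
    (hGmono : MonotoneOn G (Ioi (1 : ℝ)))
    (hkey : ∀ R ∈ Ioi (1 : ℝ), (F R) ^ 2 ≤ C ^ 2 * F' R * (R ^ 2 * G' R)) :
    (∀ r R : ℝ, 1 < r → r < R →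
      (Real.log (R / r)) ^ 2 ≤ C ^ 2 * G R / F r) ∧
    ∃ M : ℝ, ∀ᶠ R : ℝ in atTop, (Real.log R) ^ 2 / G R ≤ M := by
  have main : ∀ r R : ℝ, 1 < r → r < R →
      (Real.log (R / r)) ^ 2 ≤ C ^ 2 * G R / F r := by
    intro r R hr hrR
    have hR : 1 < R := hr.trans hrR
    have hFr : 0 < F r := hFpos r hr
    have hGR : 0 < G R := hGpos R hR
    obtain ⟨t, htpos, htsq⟩ : ∃ t : ℝ, 0 < t ∧ t ^ 2 = G R * F r :=
      ⟨Real.sqrt (G R * F r), Real.sqrt_pos.mpr (by positivity),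
        Real.sq_sqrt (by positivity)⟩
    set a : ℝ := t / C with ha
    have hapos : 0 < a := by positivity
    set ψ : ℝ → ℝ := fun s => -(a * C ^ 2) * (F s)⁻¹ + (G s) / a - 2 * Real.log s
      with hψ
    have hψd : ∀ s ∈ Ioi (1 : ℝ), HasDerivAt ψ
        (a * C ^ 2 * (F' s / (F s) ^ 2) + G' s / a - 2 / s) s := by
      intro s hs
      have hs1 : (1 : ℝ) < s := hs
      have hFs : 0 < F s := hFpos s hs
      have h1 : HasDerivAt (fun x => (F x)⁻¹) (-(F' s) / (F s) ^ 2) s :=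
        (hF' s hs).inv hFs.ne'
      have h2 : HasDerivAt (fun x => -(a * C ^ 2) * (F x)⁻¹)
          (-(a * C ^ 2) * (-(F' s) / (F s) ^ 2)) s := h1.const_mul _
      have h3 : HasDerivAt (fun x => (G x) / a) (G' s / a) s := (hG' s hs).div_const a
      have h4 : HasDerivAt (fun x => 2 * Real.log x) (2 * s⁻¹) s :=
        (Real.hasDerivAt_log (by linarith)).const_mul 2
      have h5 := (h2.add h3).sub h4
      exact h5.congr_deriv (by ring)
    have hψmono : MonotoneOn ψ (Icc r R) := by
      apply monotoneOn_of_deriv_nonneg (convex_Icc r R)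
      · intro s hs
        have hs1 : (1 : ℝ) < s := lt_of_lt_of_le hr hs.1
        exact ((hψd s hs1).continuousAt).continuousWithinAt
      · intro s hs
        rw [interior_Icc] at hs
        have hs1 : (1 : ℝ) < s := hr.trans hs.1
        exact ((hψd s hs1).differentiableAt).differentiableWithinAt
      · intro s hs
        rw [interior_Icc] at hs
        have hs1 : (1 : ℝ) < s := hr.trans hs.1
        have hsmem : s ∈ Ioi (1 : ℝ) := hs1
        rw [(hψd s hsmem).deriv]
        have hFs : 0 < F s := hFpos s hsmem
        have hF'n : 0 ≤ F' s := aux_deriv_nonneg hs1 (hF' s hsmem) hFmono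
        have hG'n : 0 ≤ G' s := aux_deriv_nonneg hs1 (hG' s hsmem) hGmono
        have hk := hkey s hsmem
        have hspos : 0 < s := by linarith
        set x := a * C ^ 2 * (F' s / (F s) ^ 2) with hx
        set y := G' s / a with hy
        have hxn : 0 ≤ x := by positivity
        have hyn : 0 ≤ y := by positivity
        have hxy : 1 ≤ x * y * s ^ 2 := by
          have hxyv : x * y = C ^ 2 * (F' s * G' s) / (F s) ^ 2 := by
            rw [hx, hy]; field_simp
          rw [hxyv, div_mul_eq_mul_div, le_div_iff₀ (by positivity)]
          nlinarith
        have hkey2 : 2 ≤ (x + y) * s := by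
          nlinarith [sq_nonneg ((x - y) * s), mul_nonneg (mul_nonneg hxn hyn) (sq_nonneg s),
            mul_nonneg (add_nonneg hxn hyn) hspos.le]
        have : 2 / s ≤ x + y := by
          rw [div_le_iff₀ hspos]; linarith
        linarith
    have hle : ψ r ≤ ψ R := hψmono (left_mem_Icc.mpr hrR.le) (right_mem_Icc.mpr hrR.le)
      hrR.le
    have hFR : 0 < F R := hFpos R hR
    have hGr : 0 < G r := hGpos r hr
    have hlog : 2 * (Real.log R - Real.log r) ≤ a * C ^ 2 / F r + G R / a := by
      simp only [hψ, div_eq_mul_inv] at hle ⊢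
      have p1 : 0 ≤ a * C ^ 2 * (F R)⁻¹ := by positivity
      have p2 : 0 ≤ G r * a⁻¹ := by positivity
      nlinarith [hle, p1, p2]
    have hlogRr : Real.log (R / r) = Real.log R - Real.log r :=
      Real.log_div (by positivity) (by positivity)
    have hrhs : a * C ^ 2 / F r + G R / a = 2 * C * G R / t := by
      rw [ha]
      field_simp
      linear_combination htsq
    have hfin : Real.log (R / r) ≤ C * G R / t := by
      rw [hlogRr]
      rw [hrhs] at hlog
      have h2 : 2 * (C * G R / t) = 2 * C * G R / t := by ring
      linarith [h2]
    have hlognn : 0 ≤ Real.log (R / r) := Real.log_nonneg (by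
      rw [le_div_iff₀ (by positivity)]; linarith)
    have hsq : (Real.log (R / r)) ^ 2 ≤ (C * G R / t) ^ 2 :=
      pow_le_pow_left₀ hlognn hfin 2
    calc (Real.log (R / r)) ^ 2 ≤ (C * G R / t) ^ 2 := hsq
      _ = C ^ 2 * G R / F r := by
          rw [div_pow, mul_pow, htsq]
          field_simp
  refine ⟨main, ⟨4 * C ^ 2 / F 2, ?_⟩⟩
  filter_upwards [eventually_ge_atTop (4 : ℝ)] with R hR4
  have hR : (2 : ℝ) < R := by linarith
  have h1 := main 2 R (by norm_num) hR
  have hGR : 0 < G R := hGpos R (mem_Ioi.mpr (by linarith))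
  have hF2 : 0 < F 2 := hFpos 2 (by norm_num)
  have hlog4 : Real.log 4 ≤ Real.log R := Real.log_le_log (by norm_num) hR4
  have hlog4v : Real.log (4:ℝ) = 2 * Real.log 2 := by
    rw [show (4:ℝ) = 2 ^ 2 by norm_num, Real.log_pow]; push_cast; ring
  have hlogR2 : Real.log (R / 2) = Real.log R - Real.log 2 :=
    Real.log_div (by positivity) (by norm_num)
  have hlogRnn : 0 ≤ Real.log R := Real.log_nonneg (by linarith)
  have hhalf : Real.log R / 2 ≤ Real.log (R / 2) := by
    rw [hlogR2]; rw [hlog4v] at hlog4; linarith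
  have hsq : (Real.log R) ^ 2 ≤ 4 * (Real.log (R / 2)) ^ 2 := by
    nlinarith [hhalf, hlogRnn]
  rw [le_div_iff₀ hF2] at h1
  rw [div_le_iff₀ hGR, show 4 * C ^ 2 / F 2 * G R = 4 * C ^ 2 * G R / F 2 by ring,
    le_div_iff₀ hF2]
  nlinarith [mul_le_mul_of_nonneg_right hsq hF2.le, h1]
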